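/- Let (X,τ) be a topological space and let λ ∈ (0,∞]. Define the λ-discrete extended distance on X by d^X_{λ-discr}(x,y) = 0 if x = y and d^X_{λ-discr}(x,y) = λ if x ≠ y. Then (X,τ,d^X_{λ-discr}) is an extended metric-topological space if and only if (X,τ) is a Tychonoff space (i.e. completely regular and Hausdorff). -/

import Mathlib

open scoped ENNReal

universe u v w

/-- An extended pseudodistance on `X`. -/
structure IsExtPseudoDist {X : Type*} (d : X → X → ℝ≥0∞) : Prop where
  refl : ∀ x, d x x = 0
  symm : ∀ x y, d x y = d y x
  triangle : ∀ x y z, d x y ≤ d x z + d z y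

/-- An extended distance on `X`. -/
structure IsExtDist {X : Type*} (d : X → X → ℝ≥0∞) : Prop where
  eq_zero_iff : ∀ x y, d x y = 0 ↔ x = y
  symm : ∀ x y, d x y = d y x
  triangle : ∀ x y z, d x y ≤ d x z + d z y

/-- `LIP_{b,1}(X,τ,d)`: bounded `τ`-continuous functions `f : X → ℝ` with
`|f x - f y| ≤ d x y`. -/
def Lip1 {X : Type*} (τ : TopologicalSpace X) (d : X → X → ℝ≥0∞) : Set (X → ℝ) :=
  {f | @Continuous X ℝ τ _ f ∧ (∃ C : ℝ, ∀ x, |f x| ≤ C) ∧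
    ∀ x y, ENNReal.ofReal |f x - f y| ≤ d x y}

/-- `(X,τ,d)` is an extended metric-topological space. -/
def IsEMT {X : Type*} (τ : TopologicalSpace X) (d : X → X → ℝ≥0∞) : Prop :=
  IsExtDist d ∧
  τ = (⨅ f ∈ Lip1 τ d, TopologicalSpace.induced f inferInstance) ∧
  (∀ x y, d x y = ⨆ f ∈ Lip1 τ d, ENNReal.ofReal |f x - f y|)

/-- A continuous-short map between (pre-)extended (pseudo)metric-topological spaces. -/
def ContinuousShort {X Y : Type*} (τX : TopologicalSpace X) (dX : X → X → ℝ≥0∞)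
    (τY : TopologicalSpace Y) (dY : Y → Y → ℝ≥0∞) (φ : X → Y) : Prop :=
  @Continuous X Y τX τY φ ∧ ∀ x y, dY (φ x) (φ y) ≤ dX x y

open scoped Classical

/-- Neighborhood filters of the initial topology of a family of real functions. -/
theorem my_nhds_iInf {X : Type u} (S : Set (X → ℝ)) (x : X) :
    @nhds X (⨅ f ∈ S, TopologicalSpace.induced f inferInstance) x
      = ⨅ f ∈ S, Filter.comap f (nhds (f x)) := by
  simp only [nhds_iInf, nhds_induced]

/-- If a topology is the initial topology of a family of real-valued continuous
functions, then it is completely regular. -/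
theorem cr_of_topology_eq {X : Type u} (τ : TopologicalSpace X) (S : Set (X → ℝ))
    (hS : ∀ f ∈ S, @Continuous X ℝ τ _ f)
    (htop : τ = ⨅ f ∈ S, TopologicalSpace.induced f inferInstance) :
    @CompletelyRegularSpace X τ := by
  letI := τ
  constructor
  intro x K hK hx
  have hU : Kᶜ ∈ ⨅ f ∈ S, Filter.comap f (nhds (f x)) := by
    rw [← my_nhds_iInf, ← htop]
    exact hK.isOpen_compl.mem_nhds hx
  rw [show (⨅ f ∈ S, Filter.comap f (nhds (f x)))
      = ⨅ f : S, Filter.comap (f : X → ℝ) (nhds ((f : X → ℝ) x)) from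
      (iInf_subtype'' S _).symm, Filter.mem_iInf] at hU
  obtain ⟨I, hIfin, V, hV, hUeq⟩ := hU
  haveI : Fintype I := hIfin.fintype
  choose t ht hsub using fun i : I => Filter.mem_comap.mp (hV i)
  choose ε hε hball using fun i : I => Metric.mem_nhds_iff.mp (ht i)
  set F : I → X → ℝ := fun i z => dist (((i : S) : X → ℝ) z) (((i : S) : X → ℝ) x) / ε i
    with hF
  have hF0 : ∀ i z, 0 ≤ F i z := fun i z => div_nonneg dist_nonneg (hε i).le
  set g : X → ℝ := fun z => min 1 (∑ i : I, F i z) with hgdef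
  have hg0 : ∀ z, 0 ≤ g z := fun z =>
    le_min zero_le_one (Finset.sum_nonneg fun i _ => hF0 i z)
  have hg1 : ∀ z, g z ≤ 1 := fun z => min_le_left _ _
  have hgc : Continuous g := by
    refine continuous_const.min (continuous_finset_sum _ fun i _ => ?_)
    exact ((hS _ (i : S).2).dist continuous_const).div_const _
  refine ⟨fun z => ⟨g z, hg0 z, hg1 z⟩, hgc.subtype_mk _, ?_, ?_⟩
  · ext
    simp [hgdef, hF]
  · intro z hz
    have hz' : z ∉ Kᶜ := fun h => h hz
    rw [hUeq, Set.mem_iInter] at hz'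
    push_neg at hz'
    obtain ⟨i, hi⟩ := hz'
    have h1 : ((i : S) : X → ℝ) z ∉ Metric.ball (((i : S) : X → ℝ) x) (ε i) := by
      intro hb
      exact hi (hsub i (hball i hb))
    have h2 : ε i ≤ dist (((i : S) : X → ℝ) z) (((i : S) : X → ℝ) x) := by
      simpa [Metric.mem_ball, not_lt] using h1
    have h3 : (1 : ℝ) ≤ F i z := by
      rw [hF]
      exact (one_le_div (hε i)).mpr h2
    have h4 : (1 : ℝ) ≤ ∑ j : I, F j z :=
      h3.trans (Finset.single_le_sum (fun j _ => hF0 j z) (Finset.mem_univ i))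
    have : g z = 1 := min_eq_left h4
    ext
    simpa using this

/-- Scaled bump functions lie in `Lip1` of the discrete distance. -/
theorem bump_mem_lip1 {X : Type u} (τ : TopologicalSpace X) (lam : ℝ≥0∞)
    (g : X → unitInterval) (hg : @Continuous X unitInterval τ _ g) (c : ℝ) (hc0 : 0 ≤ c)
    (hc : ENNReal.ofReal c ≤ lam) :
    (fun z => c * (g z : ℝ)) ∈ Lip1 τ (fun x y : X => if x = y then 0 else lam) := by
  letI := τ
  refine ⟨continuous_const.mul (continuous_subtype_val.comp hg), ⟨c, fun z => ?_⟩, ?_⟩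
  · rw [abs_mul, abs_of_nonneg hc0, abs_of_nonneg (g z).2.1]
    calc c * (g z : ℝ) ≤ c * 1 := by
          exact mul_le_mul_of_nonneg_left (g z).2.2 hc0
      _ = c := mul_one c
  · intro a b
    by_cases hab : a = b
    · simp [hab]
    · simp only [hab, if_false]
      refine le_trans (le_trans (ENNReal.ofReal_le_ofReal ?_) (le_refl _)) hc
      rw [← mul_sub, abs_mul, abs_of_nonneg hc0]
      have habs : |(g a : ℝ) - (g b : ℝ)| ≤ 1 := by
        rw [abs_sub_le_iff]
        constructor
        · linarith [(g a).2.2, (g b).2.1]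
        · linarith [(g b).2.2, (g a).2.1]
      calc c * |(g a : ℝ) - (g b : ℝ)| ≤ c * 1 := mul_le_mul_of_nonneg_left habs hc0
        _ = c := mul_one c

/-- Let `(X,τ)` be a topological space and `λ ∈ (0,∞]`. The triple `(X, τ, d^X_{λ-discr})`,
where `d^X_{λ-discr}` is the `λ`-discrete extended distance, is an e.m.t. space if and only
if `(X,τ)` is a Tychonoff space (completely regular and Hausdorff). -/
theorem isEMT_discrete_iff_tychonoff {X : Type u} (τ : TopologicalSpace X)
    (lam : ℝ≥0∞) (hlam : 0 < lam) :
    IsEMT τ (fun x y : X => if x = y then 0 else lam) ↔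
      (@CompletelyRegularSpace X τ ∧ @T2Space X τ) := by
  letI := τ
  set d : X → X → ℝ≥0∞ := fun x y => if x = y then 0 else lam with hd
  constructor
  · rintro ⟨hdist, htop, hrec⟩
    refine ⟨cr_of_topology_eq τ _ (fun f hf => hf.1) htop, ?_⟩
    constructor
    intro x y hxy
    have h2 : ∃ f ∈ Lip1 τ d, f x ≠ f y := by
      by_contra h
      push_neg at h
      have hz : (⨆ f ∈ Lip1 τ d, ENNReal.ofReal |f x - f y|) = 0 := by
        refine le_antisymm (iSup₂_le fun f hf => ?_) zero_le
        rw [h f hf]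
        simp
      have := hrec x y
      rw [hz] at this
      simp only [hd, hxy, if_false] at this
      exact hlam.ne' this
    obtain ⟨f, hf, hne⟩ := h2
    exact separated_by_continuous hf.1 hne
  · rintro ⟨hcr, ht2⟩
    haveI := hcr
    haveI := ht2
    refine ⟨⟨?_, ?_, ?_⟩, ?_, ?_⟩
    · intro x y
      by_cases h : x = y <;> simp [hd, h, hlam.ne']
    · intro x y
      by_cases h : x = y
      · simp [hd, h]
      · simp [hd, h, Ne.symm h]
    · intro x y z
      by_cases hxy : x = y
      · simp [hd, hxy]
      · by_cases hxz : x = z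
        · subst hxz
          simp [hd, hxy]
        · simp only [hd, hxy, hxz, if_false]
          exact le_self_add
    · refine le_antisymm (le_iInf fun f => le_iInf fun hf =>
        continuous_iff_le_induced.mp hf.1) ?_
      set c : ℝ := if lam = ⊤ then 1 else min 1 lam.toReal with hcdef
      have hc0 : 0 < c := by
        rw [hcdef]
        split_ifs with h
        · exact one_pos
        · exact lt_min one_pos (ENNReal.toReal_pos hlam.ne' h)
      have hclam : ENNReal.ofReal c ≤ lam := by
        rw [hcdef]
        split_ifs with h
        · simp [h]
        · refine le_trans (ENNReal.ofReal_le_ofReal (min_le_right _ _)) ?_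
          rw [ENNReal.ofReal_toReal h]
      refine le_of_nhds_le_nhds fun x => ?_
      rw [my_nhds_iInf]
      intro U hU
      obtain ⟨V, hVU, hVopen, hxV⟩ := mem_nhds_iff.mp hU
      obtain ⟨g, hgc, hgx, hgK⟩ := hcr.completely_regular x Vᶜ hVopen.isClosed_compl
        (fun h => h hxV)
      have hmem := bump_mem_lip1 τ lam g hgc c hc0.le hclam
      rw [← hd] at hmem
      refine Filter.mem_iInf_of_mem _ (Filter.mem_iInf_of_mem hmem ?_)
      refine Filter.mem_comap.mpr ⟨Set.Iio c, isOpen_Iio.mem_nhds ?_, ?_⟩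
      · simp [hgx, hc0]
      · intro z hz
        by_cases hzV : z ∈ V
        · exact hVU hzV
        · exfalso
          have h1 : g z = 1 := hgK hzV
          simp only [Set.mem_preimage, Set.mem_Iio, h1] at hz
          simp at hz
    · haveI := hcr
      haveI := ht2
      intro x y
      by_cases hxy : x = y
      · simp [hd, hxy]
      · simp only [hd, hxy, if_false]
        refine le_antisymm ?_ (iSup₂_le fun f hf => (hf.2.2 x y).trans_eq (by simp [hd, hxy]))
        obtain ⟨g, hgc, hgx, hgy⟩ := hcr.completely_regular x {y} isClosed_singleton hxy
        have key : ∀ cc : ℝ, 0 ≤ cc → ENNReal.ofReal cc ≤ lam →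
            ENNReal.ofReal cc ≤ ⨆ f ∈ Lip1 τ d, ENNReal.ofReal |f x - f y| := by
          intro cc hcc0 hcc
          have hmem := bump_mem_lip1 τ lam g hgc cc hcc0 hcc
          rw [← hd] at hmem
          have hval : ENNReal.ofReal |(fun z => cc * (g z : ℝ)) x - (fun z => cc * (g z : ℝ)) y|
              = ENNReal.ofReal cc := by
            have h1 : g y = 1 := hgy rfl
            simp [hgx, h1, abs_of_nonneg hcc0]
          calc ENNReal.ofReal cc = _ := hval.symm
            _ ≤ _ := le_iSup₂ (f := fun f (_ : f ∈ Lip1 τ d) => ENNReal.ofReal |f x - f y|)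
                _ hmem
        by_cases htop' : lam = ⊤
        · have hs : (⨆ f ∈ Lip1 τ d, ENNReal.ofReal |f x - f y|) = ⊤ :=
            ENNReal.eq_top_of_forall_nnreal_le fun r => by
              simpa [ENNReal.ofReal_coe_nnreal] using key r r.coe_nonneg (by simp [htop'])
          rw [hs]
          exact le_top
        · have := key lam.toReal ENNReal.toReal_nonneg (by rw [ENNReal.ofReal_toReal htop'])
          rwa [ENNReal.ofReal_toReal htop'] at this
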